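/- Let A = diag(a_1,...,a_n) with pairwise distinct entries and λ ∈ K. Then the set {[A,B][A,C] + λ[A,C][A,B] : B, C ∈ UT_n} contains all of UT_n^{(1)}. -/

import Mathlib

open Matrix

/-- Any strictly upper triangular matrix is a commutator `[diagonal a, B]`
with `B` upper triangular, when the `a i` are pairwise distinct. -/
theorem bracket_realize {K : Type*} [Field K] {n : ℕ}
    (a : Fin n → K) (ha : Function.Injective a)
    (D : Matrix (Fin n) (Fin n) K) (hD : ∀ i j : Fin n, ¬ i < j → D i j = 0) :
    ∃ B : Matrix (Fin n) (Fin n) K, (∀ i j : Fin n, j < i → B i j = 0) ∧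
      Matrix.diagonal a * B - B * Matrix.diagonal a = D := by
  refine ⟨Matrix.of fun i j => (a i - a j)⁻¹ * D i j, ?_, ?_⟩
  · intro i j hji
    simp only [Matrix.of_apply]
    rw [hD i j (not_lt.mpr hji.le), mul_zero]
  · ext i j
    simp only [Matrix.sub_apply, Matrix.diagonal_mul, Matrix.mul_diagonal, Matrix.of_apply]
    rcases eq_or_ne i j with rfl | hij
    · rw [hD i i (lt_irrefl i)]; ring
    · have h : a i - a j ≠ 0 := sub_ne_zero.mpr (fun h => hij (ha h))
      field_simp

/-- For `A = diag(a_1, …, a_n)` with pairwise distinct entries and `λ ∈ K`,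
the set `{[A,B][A,C] + λ[A,C][A,B] : B, C ∈ UT_n}` contains all of `UT_n^{(1)}`. -/
theorem stmt17 {K : Type*} [Field K] {n : ℕ} (hn : 2 ≤ n)
    (a : Fin n → K) (ha : Function.Injective a) (lam : K) :
    {M : Matrix (Fin n) (Fin n) K | ∀ i j : Fin n, (j : ℤ) - (i : ℤ) ≤ 1 → M i j = 0} ⊆
    {M : Matrix (Fin n) (Fin n) K | ∃ B C : Matrix (Fin n) (Fin n) K,
        (∀ i j : Fin n, j < i → B i j = 0) ∧ (∀ i j : Fin n, j < i → C i j = 0) ∧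
        M = (Matrix.diagonal a * B - B * Matrix.diagonal a)
              * (Matrix.diagonal a * C - C * Matrix.diagonal a)
          + lam • ((Matrix.diagonal a * C - C * Matrix.diagonal a)
              * (Matrix.diagonal a * B - B * Matrix.diagonal a))} := by
  intro M hM
  classical
  -- extended entries of M indexed by ℕ
  set Mext : ℕ → ℕ → K := fun p q =>
    if hp : p < n then if hq : q < n then M ⟨p, hp⟩ ⟨q, hq⟩ else 0 else 0 with hMextdef
  have hMext_zero : ∀ p q : ℕ, n ≤ p → Mext p q = 0 := by
    intro p q hp
    simp only [Mext, dif_neg (not_lt.mpr hp)]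
  -- the matrix D, designed so that D * E + lam • (E * D) = M
  set D : Matrix (Fin n) (Fin n) K := Matrix.of fun i j =>
    if (i : ℕ) < (j : ℕ) then
      ∑ t ∈ Finset.range n, (-lam) ^ t * Mext ((i : ℕ) + t) ((j : ℕ) + t + 1)
    else 0 with hDdef
  -- the superdiagonal shift matrix E
  set E : Matrix (Fin n) (Fin n) K := Matrix.of fun i j =>
    if (i : ℕ) + 1 = (j : ℕ) then 1 else 0 with hEdef
  have hDut : ∀ i j : Fin n, ¬ i < j → D i j = 0 := by
    intro i j h
    simp only [D, Matrix.of_apply]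
    rw [if_neg]
    exact fun h' => h (Fin.lt_def.mpr h')
  have hEut : ∀ i j : Fin n, ¬ i < j → E i j = 0 := by
    intro i j h
    simp only [E, Matrix.of_apply]
    rw [if_neg]
    intro h'
    exact h (Fin.lt_def.mpr (by omega))
  obtain ⟨B, hB, hBD⟩ := bracket_realize a ha D hDut
  obtain ⟨C, hC, hCE⟩ := bracket_realize a ha E hEut
  refine ⟨B, C, hB, hC, ?_⟩
  rw [hBD, hCE]
  ext i j
  simp only [Matrix.add_apply, Matrix.smul_apply, smul_eq_mul, Matrix.mul_apply]
  by_cases hj : (j : ℤ) - (i : ℤ) ≤ 1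
  · -- low part: everything vanishes
    rw [hM i j hj]
    have h1 : ∑ k : Fin n, D i k * E k j = 0 := by
      apply Finset.sum_eq_zero
      intro k _
      by_cases hk : (k : ℕ) + 1 = (j : ℕ)
      · rw [hDut i k (by intro h; rw [Fin.lt_def] at h; omega), zero_mul]
      · have : E k j = 0 := by simp only [E, Matrix.of_apply]; rw [if_neg hk]
        rw [this, mul_zero]
    have h2 : ∑ k : Fin n, E i k * D k j = 0 := by
      apply Finset.sum_eq_zero
      intro k _
      by_cases hk : (i : ℕ) + 1 = (k : ℕ)
      · rw [hDut k j (by intro h; rw [Fin.lt_def] at h; omega), mul_zero]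
      · have : E i k = 0 := by simp only [E, Matrix.of_apply]; rw [if_neg hk]
        rw [this, zero_mul]
    rw [h1, h2, mul_zero, add_zero]
  · -- main part: j ≥ i + 2
    have hij : (i : ℕ) + 2 ≤ (j : ℕ) := by omega
    have hjn : (j : ℕ) < n := j.isLt
    have h1 : ∑ k : Fin n, D i k * E k j = D i ⟨(j : ℕ) - 1, by omega⟩ := by
      rw [Finset.sum_eq_single (⟨(j : ℕ) - 1, by omega⟩ : Fin n)]
      · have : E ⟨(j : ℕ) - 1, by omega⟩ j = 1 := by
          simp only [E, Matrix.of_apply]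
          rw [if_pos (show (j : ℕ) - 1 + 1 = (j : ℕ) by omega)]
        rw [this, mul_one]
      · intro k _ hk
        have hkj : (k : ℕ) + 1 ≠ (j : ℕ) := by
          intro h
          exact hk (Fin.ext (show (k : ℕ) = (j : ℕ) - 1 by omega))
        have : E k j = 0 := by simp only [E, Matrix.of_apply]; rw [if_neg hkj]
        rw [this, mul_zero]
      · intro h
        exact absurd (Finset.mem_univ _) h
    have h2 : ∑ k : Fin n, E i k * D k j = D ⟨(i : ℕ) + 1, by omega⟩ j := by
      rw [Finset.sum_eq_single (⟨(i : ℕ) + 1, by omega⟩ : Fin n)]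
      · have : E i ⟨(i : ℕ) + 1, by omega⟩ = 1 := by
          simp [E]
        rw [this, one_mul]
      · intro k _ hk
        have hik : (i : ℕ) + 1 ≠ (k : ℕ) := by
          intro h
          exact hk (Fin.ext (show (k : ℕ) = (i : ℕ) + 1 by omega))
        have : E i k = 0 := by simp only [E, Matrix.of_apply]; rw [if_neg hik]
        rw [this, zero_mul]
      · intro h
        exact absurd (Finset.mem_univ _) h
    rw [h1, h2]
    -- unfold D
    have hD1 : D i ⟨(j : ℕ) - 1, by omega⟩ =
        ∑ t ∈ Finset.range n, (-lam) ^ t * Mext ((i : ℕ) + t) ((j : ℕ) + t) := by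
      simp only [D, Matrix.of_apply]
      rw [if_pos (show (i : ℕ) < (j : ℕ) - 1 by omega)]
      apply Finset.sum_congr rfl
      intro t _
      rw [show (j : ℕ) - 1 + t + 1 = (j : ℕ) + t from by omega]
    have hD2 : D ⟨(i : ℕ) + 1, by omega⟩ j =
        ∑ t ∈ Finset.range n, (-lam) ^ t * Mext ((i : ℕ) + (t + 1)) ((j : ℕ) + (t + 1)) := by
      simp only [D, Matrix.of_apply]
      rw [if_pos (show (i : ℕ) + 1 < (j : ℕ) by omega)]
      apply Finset.sum_congr rfl
      intro t _
      rw [show (i : ℕ) + 1 + t = (i : ℕ) + (t + 1) from by omega,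
        show (j : ℕ) + t + 1 = (j : ℕ) + (t + 1) from by omega]
    rw [hD1, hD2]
    set g : ℕ → K := fun t => (-lam) ^ t * Mext ((i : ℕ) + t) ((j : ℕ) + t) with hg
    have hlam : lam * ∑ t ∈ Finset.range n,
        (-lam) ^ t * Mext ((i : ℕ) + (t + 1)) ((j : ℕ) + (t + 1))
        = -∑ t ∈ Finset.range n, g (t + 1) := by
      rw [Finset.mul_sum, ← Finset.sum_neg_distrib]
      apply Finset.sum_congr rfl
      intro t _
      simp only [g]
      ring
    rw [hlam]
    have hshift : ∑ t ∈ Finset.range n, g (t + 1) = (∑ t ∈ Finset.range n, g t) + g n - g 0 := by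
      have := Finset.sum_range_succ' g n
      rw [Finset.sum_range_succ] at this
      linear_combination -this
    rw [hshift]
    have hgn : g n = 0 := by
      simp only [g]
      rw [hMext_zero _ _ (by omega), mul_zero]
    have hg0 : g 0 = M i j := by
      simp only [g, pow_zero, one_mul, add_zero, Mext]
      rw [dif_pos i.isLt, dif_pos j.isLt]
    rw [hgn, hg0]
    ring
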